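/- Let H be a nonzero complex Hilbert space and let B, C be bounded linear operators on H. Then w_e(B, C)² ≤ min{ ‖B*B + C*C‖^{1/2}·‖BB* + CC*‖^{1/2}, ‖B*B + CC*‖^{1/2}·‖BB* + C*C‖^{1/2} }, where ‖·‖ denotes the operator norm. -/

import Mathlib

open scoped InnerProductSpace
open ContinuousLinearMap

variable {H : Type*} [NormedAddCommGroup H] [InnerProductSpace ℂ H]
  [CompleteSpace H] [Nontrivial H]

/-- The numerical radius of a bounded linear operator. -/
noncomputable def numRad (A : H →L[ℂ] H) : ℝ :=
  ⨆ x : {x : H // ‖x‖ = 1}, ‖⟪A x.1, x.1⟫_ℂ‖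

/-- The Crawford number of a bounded linear operator. -/
noncomputable def crawford (A : H →L[ℂ] H) : ℝ :=
  ⨅ x : {x : H // ‖x‖ = 1}, ‖⟪A x.1, x.1⟫_ℂ‖

/-- The Euclidean operator radius of a pair of bounded linear operators. -/
noncomputable def euclRad (B C : H →L[ℂ] H) : ℝ :=
  ⨆ x : {x : H // ‖x‖ = 1}, Real.sqrt (‖⟪B x.1, x.1⟫_ℂ‖ ^ 2 + ‖⟪C x.1, x.1⟫_ℂ‖ ^ 2)

/-- The absolute value `|A| = (A*A)^(1/2)` of a bounded linear operator. -/
noncomputable def opAbs (A : H →L[ℂ] H) : H →L[ℂ] H := CFC.sqrt (adjoint A * A)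

/-- The real part `Re(A) = (A + A*)/2` of a bounded linear operator. -/
noncomputable def reOp (A : H →L[ℂ] H) : H →L[ℂ] H := (2 : ℂ)⁻¹ • (A + adjoint A)

/-- The imaginary part `Im(A) = (A - A*)/(2i)` of a bounded linear operator. -/
noncomputable def imOp (A : H →L[ℂ] H) : H →L[ℂ] H := (2 * Complex.I)⁻¹ • (A - adjoint A)

lemma aux_inner_le_norm (A : H →L[ℂ] H) {x : H} (hx : ‖x‖ = 1) :
    ‖⟪A x, x⟫_ℂ‖ ≤ ‖A x‖ := by
  calc ‖⟪A x, x⟫_ℂ‖ ≤ ‖A x‖ * ‖x‖ := norm_inner_le_norm _ _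
  _ = ‖A x‖ := by rw [hx, mul_one]

lemma aux_inner_le_norm_adj (A : H →L[ℂ] H) {x : H} (hx : ‖x‖ = 1) :
    ‖⟪A x, x⟫_ℂ‖ ≤ ‖adjoint A x‖ := by
  rw [← adjoint_inner_right]
  calc ‖⟪x, adjoint A x⟫_ℂ‖ ≤ ‖x‖ * ‖adjoint A x‖ := norm_inner_le_norm _ _
  _ = ‖adjoint A x‖ := by rw [hx, one_mul]

lemma aux_sum_sq_le (A B : H →L[ℂ] H) {x : H} (hx : ‖x‖ = 1) :
    ‖A x‖ ^ 2 + ‖B x‖ ^ 2 ≤ ‖adjoint A * A + adjoint B * B‖ := by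
  have h1 : (‖A x‖ ^ 2 + ‖B x‖ ^ 2 : ℝ)
      = Complex.re ⟪(adjoint A * A + adjoint B * B) x, x⟫_ℂ := by
    have hre : ∀ y : H, (⟪y, y⟫_ℂ).re = ‖y‖ ^ 2 := fun y => inner_self_eq_norm_sq (𝕜 := ℂ) y
    simp [mul_apply, inner_add_left, adjoint_inner_left, hre]
    rw [← Complex.ofReal_pow, ← Complex.ofReal_pow, Complex.ofReal_re, Complex.ofReal_re]
  rw [h1]
  calc Complex.re ⟪(adjoint A * A + adjoint B * B) x, x⟫_ℂ
      ≤ ‖⟪(adjoint A * A + adjoint B * B) x, x⟫_ℂ‖ := Complex.re_le_norm _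
  _ ≤ ‖(adjoint A * A + adjoint B * B) x‖ := aux_inner_le_norm _ hx
  _ ≤ ‖adjoint A * A + adjoint B * B‖ * ‖x‖ := le_opNorm _ _
  _ = _ := by rw [hx, mul_one]

lemma aux_key {a b v1 v2 w1 w2 N1 N2 : ℝ} (ha : 0 ≤ a) (hb : 0 ≤ b)
    (hv1 : 0 ≤ v1) (hv2 : 0 ≤ v2) (hw1 : 0 ≤ w1) (hw2 : 0 ≤ w2)
    (hav : a ≤ v1) (haw : a ≤ w1) (hbv : b ≤ v2) (hbw : b ≤ w2)
    (h1 : v1 ^ 2 + v2 ^ 2 ≤ N1) (h2 : w1 ^ 2 + w2 ^ 2 ≤ N2) :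
    a ^ 2 + b ^ 2 ≤ Real.sqrt N1 * Real.sqrt N2 := by
  have step1 : a ^ 2 + b ^ 2 ≤ v1 * w1 + v2 * w2 := by nlinarith
  have step2 : v1 * w1 + v2 * w2 ≤ Real.sqrt ((v1 ^ 2 + v2 ^ 2) * (w1 ^ 2 + w2 ^ 2)) := by
    apply Real.le_sqrt_of_sq_le
    nlinarith [sq_nonneg (v1 * w2 - v2 * w1)]
  have step3 : Real.sqrt ((v1 ^ 2 + v2 ^ 2) * (w1 ^ 2 + w2 ^ 2))
      ≤ Real.sqrt N1 * Real.sqrt N2 := by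
    have hw : (0:ℝ) ≤ w1 ^ 2 + w2 ^ 2 := by positivity
    have hN1 : (0:ℝ) ≤ N1 := le_trans (by positivity) h1
    rw [← Real.sqrt_mul hN1 N2]
    exact Real.sqrt_le_sqrt (mul_le_mul h1 h2 hw hN1)
  linarith

lemma aux_euclRad_le (B C : H →L[ℂ] H) {M : ℝ}
    (h : ∀ x : H, ‖x‖ = 1 →
      ‖⟪B x, x⟫_ℂ‖ ^ 2 + ‖⟪C x, x⟫_ℂ‖ ^ 2 ≤ M) :
    euclRad B C ^ 2 ≤ M := by
  obtain ⟨y, hy⟩ := exists_ne (0 : H)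
  have hys : ‖(‖y‖⁻¹ • y : H)‖ = 1 := norm_smul_inv_norm hy
  have hM : 0 ≤ M := le_trans (by positivity) (h _ hys)
  haveI : Nonempty {x : H // ‖x‖ = 1} := ⟨⟨_, hys⟩⟩
  have hle : euclRad B C ≤ Real.sqrt M := by
    apply ciSup_le
    rintro ⟨x, hx⟩
    exact Real.sqrt_le_sqrt (h x hx)
  have hnn : 0 ≤ euclRad B C := by
    apply Real.iSup_nonneg
    intro x
    positivity
  calc euclRad B C ^ 2 ≤ Real.sqrt M ^ 2 := by
        apply pow_le_pow_left₀ hnn hle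
  _ = M := Real.sq_sqrt hM

theorem stmt3 (B C : H →L[ℂ] H) :
    (euclRad B C) ^ 2 ≤
      min (Real.sqrt ‖adjoint B * B + adjoint C * C‖ *
            Real.sqrt ‖B * adjoint B + C * adjoint C‖)
          (Real.sqrt ‖adjoint B * B + C * adjoint C‖ *
            Real.sqrt ‖B * adjoint B + adjoint C * C‖) := by
  have hBB : B * adjoint B = adjoint (adjoint B) * adjoint B := by
    rw [adjoint_adjoint]
  have hCC : C * adjoint C = adjoint (adjoint C) * adjoint C := by
    rw [adjoint_adjoint]
  apply le_min
  · apply aux_euclRad_le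
    intro x hx
    apply aux_key (norm_nonneg _) (norm_nonneg _) (norm_nonneg (B x))
      (norm_nonneg (C x)) (norm_nonneg (adjoint B x)) (norm_nonneg (adjoint C x))
      (aux_inner_le_norm B hx) (aux_inner_le_norm_adj B hx)
      (aux_inner_le_norm C hx) (aux_inner_le_norm_adj C hx)
      (aux_sum_sq_le B C hx)
    have := aux_sum_sq_le (adjoint B) (adjoint C) hx
    rwa [← hBB, ← hCC] at this
  · apply aux_euclRad_le
    intro x hx
    apply aux_key (norm_nonneg _) (norm_nonneg _) (norm_nonneg (B x))
      (norm_nonneg (adjoint C x)) (norm_nonneg (adjoint B x)) (norm_nonneg (C x))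
      (aux_inner_le_norm B hx) (aux_inner_le_norm_adj B hx)
      (aux_inner_le_norm_adj C hx) (aux_inner_le_norm C hx)
    · have := aux_sum_sq_le B (adjoint C) hx
      rwa [← hCC] at this
    · have := aux_sum_sq_le (adjoint B) C hx
      rwa [← hBB] at this
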